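/- Fix Seifert data and the associated star-shaped plumbing lattice. Then Z_K ≥ s_{[Z_K]} componentwise, where s_{[Z_K]} is the unique minimal element of (Z_K + ℤ^𝒱) ∩ 𝒮'. -/
import Mathlib


open Matrix

/-- Negative (Hirzebruch) continued fraction `[b₁,…,b_k] = b₁ − 1/(b₂ − 1/(⋯))`
(with the convention `1/0 = 0`, so that `ncf [b] = b`). -/
def ncf : List ℚ → ℚ
  | [] => 0
  | b :: rest => b - 1 / ncf rest

/-- For the star-shaped plumbing lattice of Seifert data, `Z_K ≥ s_{[Z_K]}`,
where `s_{[Z_K]}` is the unique minimal element of `(Z_K + ℤ^𝒱) ∩ 𝒮'`. -/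
theorem stmt_13
    (d : ℕ) (hd : 3 ≤ d) (b₀ : ℤ)
    (α ω : Fin d → ℤ)
    (hω : ∀ i, 0 < ω i ∧ ω i < α i)
    (hcop : ∀ i, IsCoprime (α i) (ω i))
    (e : ℚ) (he : e = -(b₀ : ℚ) + ∑ i, (ω i : ℚ) / (α i : ℚ)) (heneg : e < 0)
    -- the legs: negative continued fraction expansions αᵢ/ωᵢ = [b_{i1},…,b_{iνᵢ}]
    (ν : Fin d → ℕ) (hν : ∀ i, 0 < ν i)
    (b : (i : Fin d) → Fin (ν i) → ℤ) (hb : ∀ i j, 2 ≤ b i j)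
    (hcf : ∀ i, ncf (List.ofFn fun j => ((b i j : ℤ) : ℚ)) = (α i : ℚ) / (ω i : ℚ))
    -- the intersection matrix of the star-shaped plumbing graph
    (I : Matrix (Option ((i : Fin d) × Fin (ν i))) (Option ((i : Fin d) × Fin (ν i))) ℚ)
    (hsym : I.IsSymm)
    (hI00 : I none none = -(b₀ : ℚ))
    (hIdiag : ∀ i j, I (some ⟨i, j⟩) (some ⟨i, j⟩) = -((b i j : ℤ) : ℚ))
    (hI0leg : ∀ i (j : Fin (ν i)),
      I none (some ⟨i, j⟩) = if (j : ℕ) = 0 then 1 else 0)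
    (hIleg : ∀ i (j j' : Fin (ν i)), j ≠ j' →
      I (some ⟨i, j⟩) (some ⟨i, j'⟩) =
        if (j : ℕ) + 1 = (j' : ℕ) ∨ (j' : ℕ) + 1 = (j : ℕ) then 1 else 0)
    (hIcross : ∀ i i', i ≠ i' → ∀ (j : Fin (ν i)) (j' : Fin (ν i')),
      I (some ⟨i, j⟩) (some ⟨i', j'⟩) = 0)
    (hnegdef : ∀ x : Option ((i : Fin d) × Fin (ν i)) → ℚ, x ≠ 0 → x ⬝ᵥ I.mulVec x < 0)
    -- the anticanonical cycle
    (ZK : Option ((i : Fin d) × Fin (ν i)) → ℚ)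
    (hZK : ∀ v, ZK ⬝ᵥ I.mulVec (Pi.single v 1) = I v v + 2)
    -- the minimal anti-nef cycle in the class of Z_K
    (s : Option ((i : Fin d) × Fin (ν i)) → ℚ)
    (hs : IsLeast {x | (∀ v, ∃ k : ℤ, x v - ZK v = (k : ℚ)) ∧
      ∀ v, x ⬝ᵥ I.mulVec (Pi.single v 1) ≤ 0} s) :
    s ≤ ZK := by
  obtain ⟨⟨hscl, hsnef⟩, hmin⟩ := hs
  -- the pairing with basis vectors
  have Pform : ∀ (x : Option ((i : Fin d) × Fin (ν i)) → ℚ) v,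
      x ⬝ᵥ I.mulVec (Pi.single v 1) = ∑ u, x u * I u v := by
    intro x v
    rw [mulVec_single]
    simp [dotProduct]
  -- off-diagonal entries of I are nonnegative
  have hoff : ∀ u v : Option ((i : Fin d) × Fin (ν i)), u ≠ v → 0 ≤ I u v := by
    intro u v huv
    match u, v with
    | none, none => exact absurd rfl huv
    | none, some ⟨i, j⟩ =>
        rw [hI0leg]; split <;> norm_num
    | some ⟨i, j⟩, none =>
        rw [← hsym.apply, hI0leg]; split <;> norm_num
    | some ⟨i, j⟩, some ⟨i', j'⟩ =>
        by_cases hi : i = i'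
        · subst hi
          have hj : j ≠ j' := by
            intro hjj; exact huv (by rw [hjj])
          rw [hIleg i j j' hj]; split <;> norm_num
        · rw [hIcross i i' hi]
  -- monotonicity: adding a nonpositive vector vanishing at v decreases the pairing
  have hPmono : ∀ (a w : Option ((i : Fin d) × Fin (ν i)) → ℚ) v,
      (∀ u, w u ≤ 0) → w v = 0 →
      (a + w) ⬝ᵥ I.mulVec (Pi.single v 1) ≤ a ⬝ᵥ I.mulVec (Pi.single v 1) := by
    intro a w v hw hwv
    rw [Pform, Pform]
    have hsplit : ∑ u, (a + w) u * I u v = ∑ u, a u * I u v + ∑ u, w u * I u v := by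
      rw [← Finset.sum_add_distrib]
      exact Finset.sum_congr rfl fun u _ => by simp [add_mul]
    rw [hsplit]
    have hle : ∑ u, w u * I u v ≤ 0 := by
      apply Finset.sum_nonpos
      intro u _
      by_cases huv : u = v
      · subst huv; rw [hwv, zero_mul]
      · exact mul_nonpos_of_nonpos_of_nonneg (hw u) (hoff u v huv)
    linarith
  -- b₀ ≥ 1
  have hb₀ : 1 ≤ b₀ := by
    have hsum : 0 < ∑ i, (ω i : ℚ) / (α i : ℚ) := by
      apply Finset.sum_pos
      · intro i _
        have h1 : (0 : ℚ) < (ω i : ℚ) := by exact_mod_cast (hω i).1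
        have h2 : (0 : ℚ) < (α i : ℚ) := by
          exact_mod_cast lt_trans (hω i).1 (hω i).2
        positivity
      · have hdpos : 0 < d := by omega
        have : Nonempty (Fin d) := Fin.pos_iff_nonempty.mp hdpos
        exact Finset.univ_nonempty
    have hbq : (0 : ℚ) < (b₀ : ℚ) := by rw [he] at heneg; linarith
    have : (0 : ℤ) < b₀ := by exact_mod_cast hbq
    omega
  -- the candidate m = min s ZK
  by_cases hmnef : ∀ v, (fun v => min (s v) (ZK v)) ⬝ᵥ I.mulVec (Pi.single v 1) ≤ 0
  · -- m is in the set, so s ≤ m ≤ ZK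
    have hmem : (fun v => min (s v) (ZK v)) ∈ {x | (∀ v, ∃ k : ℤ, x v - ZK v = (k : ℚ)) ∧
        ∀ v, x ⬝ᵥ I.mulVec (Pi.single v 1) ≤ 0} := by
      refine ⟨fun v => ?_, hmnef⟩
      obtain ⟨k, hk⟩ := hscl v
      refine ⟨min k 0, ?_⟩
      rcases le_total (s v) (ZK v) with h | h
      · simp only [min_eq_left h]
        have hk0 : k ≤ 0 := by
          have : (k : ℚ) ≤ 0 := by linarith
          exact_mod_cast this
        rw [min_eq_left hk0]; exact hk
      · simp only [min_eq_right h]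
        have hk0 : (0 : ℤ) ≤ k := by
          have : (0 : ℚ) ≤ (k : ℚ) := by linarith
          exact_mod_cast this
        rw [min_eq_right hk0]; push_cast; ring
    have hsm := hmin hmem
    intro v
    exact le_trans (hsm v) (min_le_right _ _)
  · -- bad case: some vertex violates anti-nefness of m
    push_neg at hmnef
    obtain ⟨v, hv⟩ := hmnef
    -- first, s v > ZK v at the violating vertex
    have hzv : ZK v < s v := by
      by_contra hle
      push_neg at hle
      have hmv : (fun u => min (s u) (ZK u)) = s + (fun u => min (s u) (ZK u) - s u) := by
        funext u; simp
      have h1 : ∀ u, min (s u) (ZK u) - s u ≤ 0 := by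
        intro u; simp [min_le_left]
      have h2 : min (s v) (ZK v) - s v = 0 := by
        rw [min_eq_left hle]; ring
      have := hPmono s (fun u => min (s u) (ZK u) - s u) v h1 h2
      rw [← hmv] at this
      exact absurd (le_trans this (hsnef v)) (not_le.mpr hv)
    -- hence (m, E_v) ≤ I v v + 2, so I v v + 2 > 0, forcing v = none and b₀ = 1
    have hIv : 0 < I v v + 2 := by
      have hmv : (fun u => min (s u) (ZK u)) = ZK + (fun u => min (s u) (ZK u) - ZK u) := by
        funext u; simp
      have h1 : ∀ u, min (s u) (ZK u) - ZK u ≤ 0 := by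
        intro u; simp [min_le_right]
      have h2 : min (s v) (ZK v) - ZK v = 0 := by
        rw [min_eq_right hzv.le]; ring
      have := hPmono ZK (fun u => min (s u) (ZK u) - ZK u) v h1 h2
      rw [← hmv, hZK v] at this
      linarith
    have hvnone : v = none := by
      match v with
      | none => rfl
      | some ⟨i, j⟩ =>
        rw [hIdiag i j] at hIv
        have : (2 : ℚ) ≤ ((b i j : ℤ) : ℚ) := by exact_mod_cast hb i j
        linarith
    subst hvnone
    have hb₀1 : b₀ = 1 := by
      rw [hI00] at hIv
      have h2 : (b₀ : ℚ) < 2 := by linarith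
      have : b₀ < 2 := by exact_mod_cast h2
      omega
    -- the auxiliary anti-nef cycle x = ZK - 2 E₀ - ∑ᵢ E_{i,0}
    set y : Option ((i : Fin d) × Fin (ν i)) → ℚ :=
      fun u => match u with
        | none => 2
        | some p => if (p.2 : ℕ) = 0 then 1 else 0
      with hy
    have hynone : y none = 2 := rfl
    have hysome : ∀ p : (i : Fin d) × Fin (ν i),
        y (some p) = if (p.2 : ℕ) = 0 then 1 else 0 := fun p => rfl
    -- compute the pairing of y with each basis vector
    have hysum : ∀ u, y ⬝ᵥ I.mulVec (Pi.single u 1) =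
        2 * I none u + ∑ i, I (some ⟨i, ⟨0, hν i⟩⟩) u := by
      intro u
      rw [Pform, Fintype.sum_option, hynone]
      congr 1
      rw [← Finset.univ_sigma_univ, Finset.sum_sigma]
      apply Finset.sum_congr rfl
      intro i _
      rw [Finset.sum_eq_single (⟨0, hν i⟩ : Fin (ν i))]
      · rw [hysome]; simp
      · intro j _ hj
        have hj0 : (j : ℕ) ≠ 0 := fun h0 => hj (Fin.ext h0)
        rw [hysome]
        simp [hj0]
      · intro h; exact absurd (Finset.mem_univ _) h
    -- x = ZK - y is anti-nef
    have hxnef : ∀ u, (ZK - y) ⬝ᵥ I.mulVec (Pi.single u 1) ≤ 0 := by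
      intro u
      rw [sub_dotProduct, hZK u, hysum u]
      match u with
      | none =>
        have hsum1 : ∑ i : Fin d, I (some ⟨i, ⟨0, hν i⟩⟩) none = d := by
          have hone : ∀ i : Fin d, I (some ⟨i, ⟨0, hν i⟩⟩) none = 1 := by
            intro i
            rw [← hsym.apply, hI0leg]
            simp
          rw [Finset.sum_congr rfl fun i _ => hone i]
          simp
        rw [hsum1, hI00, hb₀1]
        have hdq : (3 : ℚ) ≤ (d : ℚ) := by exact_mod_cast hd
        push_cast
        linarith
      | some ⟨i, j⟩ =>
        have hsum2 : ∑ i' : Fin d, I (some ⟨i', ⟨0, hν i'⟩⟩) (some ⟨i, j⟩) =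
            I (some ⟨i, ⟨0, hν i⟩⟩) (some ⟨i, j⟩) := by
          rw [Finset.sum_eq_single i]
          · intro i' _ hi'
            exact hIcross i' i hi' _ _
          · intro h; exact absurd (Finset.mem_univ _) h
        rw [hsum2, hIdiag, hI0leg]
        have hbij : (2 : ℚ) ≤ ((b i j : ℤ) : ℚ) := by exact_mod_cast hb i j
        by_cases hj0 : (j : ℕ) = 0
        · have hje : (⟨0, hν i⟩ : Fin (ν i)) = j := Fin.ext (by simp [hj0])
          rw [hje, hIdiag]
          simp only [hj0, if_true]
          linarith
        · have hne : (⟨0, hν i⟩ : Fin (ν i)) ≠ j := by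
            intro h; exact hj0 (by rw [← h])
          rw [hIleg i _ j hne]
          simp only [hj0, if_false]
          have h1 : (0:ℚ) ≤ (if (((⟨0, hν i⟩ : Fin (ν i)) : ℕ)) + 1 = (j : ℕ) ∨ (j : ℕ) + 1 = ((⟨0, hν i⟩ : Fin (ν i)) : ℕ) then (1:ℚ) else 0) := by
            split <;> norm_num
          have h2 : (if (((⟨0, hν i⟩ : Fin (ν i)) : ℕ)) + 1 = (j : ℕ) ∨ (j : ℕ) + 1 = ((⟨0, hν i⟩ : Fin (ν i)) : ℕ) then (1:ℚ) else 0) ≤ 1 := by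
            split <;> norm_num
          linarith
    -- x is in the class of ZK
    have hxcl : ∀ u, ∃ k : ℤ, (ZK - y) u - ZK u = (k : ℚ) := by
      intro u
      match u with
      | none => exact ⟨-2, by rw [Pi.sub_apply, hynone]; push_cast; ring⟩
      | some p =>
        by_cases hj0 : ((p.2 : ℕ)) = 0
        · refine ⟨-1, ?_⟩
          rw [Pi.sub_apply, hysome]
          simp [hj0]
        · refine ⟨0, ?_⟩
          rw [Pi.sub_apply, hysome]
          simp [hj0]
    -- so s ≤ ZK - y, contradicting ZK none < s none
    have hsx := hmin ⟨hxcl, hxnef⟩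
    have hfin := hsx none
    rw [Pi.sub_apply, hynone] at hfin
    intro u
    linarith
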